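/- Let m be a positive integer and let s be an integer with 1 ≤ s ≤ 2^m. Then the binary Hamming weight of s·(2^m - 1) equals m, and consequently the Hamming weight of s·(2^m - 1) + 1 is at most m + 1. -/

import Mathlib

private lemma wt_step (n : ℕ) :
    (Nat.digits 2 n).sum = n % 2 + (Nat.digits 2 (n / 2)).sum := by
  rcases Nat.eq_zero_or_pos n with h | h
  · simp [h]
  · rw [Nat.digits_def' (by norm_num : 1 < 2) h]; simp

private lemma wt_mul_pow_add (m : ℕ) :
    ∀ a b : ℕ, b < 2 ^ m →
      (Nat.digits 2 (a * 2 ^ m + b)).sum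
        = (Nat.digits 2 a).sum + (Nat.digits 2 b).sum := by
  induction m with
  | zero =>
    intro a b hb
    interval_cases b
    simp
  | succ m ih =>
    intro a b hb
    rw [wt_step (a * 2 ^ (m + 1) + b), wt_step b]
    have e : a * 2 ^ (m + 1) = 2 * (a * 2 ^ m) := by rw [pow_succ]; ring
    have h1 : (a * 2 ^ (m + 1) + b) % 2 = b % 2 := by
      rw [e]; omega
    have h2 : (a * 2 ^ (m + 1) + b) / 2 = a * 2 ^ m + b / 2 := by
      rw [e]; omega
    have h3 : b / 2 < 2 ^ m := by
      rw [pow_succ] at hb; omega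
    rw [h1, h2, ih a (b / 2) h3]
    omega

private lemma wt_compl (m : ℕ) :
    ∀ a : ℕ, a < 2 ^ m →
      (Nat.digits 2 (2 ^ m - 1 - a)).sum + (Nat.digits 2 a).sum = m := by
  induction m with
  | zero =>
    intro a ha
    interval_cases a
    simp
  | succ m ih =>
    intro a ha
    have hq : a / 2 < 2 ^ m := by rw [pow_succ] at ha; omega
    have h1 : (2 ^ (m + 1) - 1 - a) % 2 = 1 - a % 2 := by
      have : 0 < 2 ^ (m + 1) := Nat.pow_pos (by norm_num)
      rw [pow_succ] at *
      omega
    have h2 : (2 ^ (m + 1) - 1 - a) / 2 = 2 ^ m - 1 - a / 2 := by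
      have : 0 < 2 ^ m := Nat.pow_pos (by norm_num)
      rw [pow_succ] at *
      omega
    rw [wt_step (2 ^ (m + 1) - 1 - a), wt_step a, h1, h2]
    have := ih (a / 2) hq
    omega

private lemma wt_succ_le (n : ℕ) :
    (Nat.digits 2 (n + 1)).sum ≤ (Nat.digits 2 n).sum + 1 := by
  induction n using Nat.strong_induction_on with
  | _ n ih =>
    rcases Nat.eq_zero_or_pos n with h | h
    · simp [h]
    rw [wt_step (n + 1), wt_step n]
    have := Nat.even_or_odd n
    rw [Nat.even_iff, Nat.odd_iff] at this
    rcases this with he | ho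
    · have h1 : (n + 1) % 2 = 1 := by omega
      have h2 : (n + 1) / 2 = n / 2 := by omega
      rw [h1, h2]; omega
    · have h1 : (n + 1) % 2 = 0 := by omega
      have h2 : (n + 1) / 2 = n / 2 + 1 := by omega
      have := ih (n / 2) (by omega)
      rw [h1, h2]
      omega

theorem stmt_18 (m s : ℕ) (hm : 0 < m) (hs1 : 1 ≤ s) (hs2 : s ≤ 2 ^ m) :
    (Nat.digits 2 (s * (2 ^ m - 1))).sum = m ∧
      (Nat.digits 2 (s * (2 ^ m - 1) + 1)).sum ≤ m + 1 := by
  have hP : 1 ≤ 2 ^ m := Nat.one_le_two_pow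
  have key : s * (2 ^ m - 1) = (s - 1) * 2 ^ m + (2 ^ m - s) := by
    zify [hs1, hs2, hP]
    ring
  have ha : s - 1 < 2 ^ m := by omega
  have hb : 2 ^ m - s = 2 ^ m - 1 - (s - 1) := by omega
  have h1 : (Nat.digits 2 (s * (2 ^ m - 1))).sum = m := by
    rw [key, wt_mul_pow_add m (s - 1) (2 ^ m - s) (by omega), hb]
    have := wt_compl m (s - 1) ha
    omega
  exact ⟨h1, le_trans (wt_succ_le _) (by omega)⟩
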